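/- Let (I, Ω) be a quiver with doubled arrow set H. Let (V_i)_{i∈I}, (V′_i)_{i∈I}, (W_i)_{i∈I}, (W′_i)_{i∈I} be finite-dimensional complex vector spaces, let x = (x_h)_{h∈H} be a representation of the doubled quiver on (V_i), let x′ = (x′_h)_{h∈H} be a representation on (V′_i), and let f′_i : V′_i → W′_i be linear maps for each i. Assume the pair (x′, f′) is stable, i.e. the only family of subspaces S_i ⊆ ker f′_i satisfying x′_h(S_{s(h)}) ⊆ S_{t(h)} for all h ∈ H is the zero family. Then the linear map ζ : (⊕_{i∈I} Hom(W′_i, V_i)) ⊕ (⊕_{h∈H} Hom(V′_{s(h)}, V_{t(h)})) → ⊕_{i∈I} Hom(V′_i, V_i), whose i-th component is ζ_i(τ, η) = τ_i ∘ f′_i + Σ_{h∈H: s(h)=i} ε(h̄)·( x_{h̄} ∘ η_h + η_{h̄} ∘ x′_h ), is surjective. -/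

import Mathlib

/-! Doubled quiver setup: `H = Ω ⊕ Ω`, `bar` the reversal involution, `eps = ±1`. -/

/-- The arrow set of the doubled quiver. -/
abbrev DblH (Ω : Type) : Type := Ω ⊕ Ω

/-- Source map of the doubled quiver. -/
def dblSrc {I Ω : Type} (s t : Ω → I) : DblH Ω → I := Sum.elim s t

/-- Target map of the doubled quiver. -/
def dblTgt {I Ω : Type} (s t : Ω → I) : DblH Ω → I := Sum.elim t s

/-- The involution `h ↦ h̄` of the doubled quiver. -/
def dblBar {Ω : Type} : DblH Ω → DblH Ω := Sum.elim Sum.inr Sum.inl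

/-- `ε(h) = 1` for `h ∈ Ω`, `ε(h) = −1` for `h ∈ Ω̄`. -/
def dblEps {Ω : Type} : DblH Ω → ℂ := Sum.elim (fun _ => 1) (fun _ => -1)

theorem dblSrc_bar {I Ω : Type} (s t : Ω → I) (h : DblH Ω) :
    dblSrc s t (dblBar h) = dblTgt s t h := by cases h <;> rfl

theorem dblTgt_bar {I Ω : Type} (s t : Ω → I) (h : DblH Ω) :
    dblTgt s t (dblBar h) = dblSrc s t h := by cases h <;> rfl

/-- Transport of a linear map along an equality of vertices (cast of the codomain). -/
def cmap {I : Type} (J : I → Type) [∀ j, AddCommGroup (J j)] [∀ j, Module ℂ (J j)]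
    {X : Type} [AddCommGroup X] [Module ℂ X] {a b : I} (hab : a = b)
    (f : X →ₗ[ℂ] J a) : X →ₗ[ℂ] J b := hab ▸ f

/-- Transport of a linear map along equalities of vertices (cast of domain and
codomain). -/
def lcast {I : Type} (A B : I → Type)
    [∀ j, AddCommGroup (A j)] [∀ j, Module ℂ (A j)]
    [∀ j, AddCommGroup (B j)] [∀ j, Module ℂ (B j)]
    {a a' b b' : I} (ha : a = a') (hb : b = b')
    (f : A a →ₗ[ℂ] B b) : A a' →ₗ[ℂ] B b' := ha ▸ hb ▸ f

open LinearMap Module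

section CastLemmas

variable {I : Type} (A B : I → Type)
    [∀ j, AddCommGroup (A j)] [∀ j, Module ℂ (A j)]
    [∀ j, AddCommGroup (B j)] [∀ j, Module ℂ (B j)]

theorem cmap_zero {X : Type} [AddCommGroup X] [Module ℂ X] {a b : I} (hab : a = b) :
    cmap A hab (0 : X →ₗ[ℂ] A a) = 0 := by subst hab; rfl

theorem cmap_add {X : Type} [AddCommGroup X] [Module ℂ X] {a b : I} (hab : a = b)
    (f g : X →ₗ[ℂ] A a) : cmap A hab (f + g) = cmap A hab f + cmap A hab g := by
  subst hab; rfl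

theorem cmap_smul {X : Type} [AddCommGroup X] [Module ℂ X] {a b : I} (hab : a = b) (c : ℂ)
    (f : X →ₗ[ℂ] A a) : cmap A hab (c • f) = c • cmap A hab f := by subst hab; rfl

theorem lcast_zero {a a' b b' : I} (ha : a = a') (hb : b = b') :
    lcast A B ha hb (0 : A a →ₗ[ℂ] B b) = 0 := by subst ha; subst hb; rfl

theorem lcast_add {a a' b b' : I} (ha : a = a') (hb : b = b') (f g : A a →ₗ[ℂ] B b) :
    lcast A B ha hb (f + g) = lcast A B ha hb f + lcast A B ha hb g := by
  subst ha; subst hb; rfl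

theorem lcast_smul {a a' b b' : I} (ha : a = a') (hb : b = b') (c : ℂ) (f : A a →ₗ[ℂ] B b) :
    lcast A B ha hb (c • f) = c • lcast A B ha hb f := by subst ha; subst hb; rfl

end CastLemmas

/-- If `tr (φ ∘ z) = 0` for every `z`, then `φ = 0`. -/
theorem trace_comp_eq_zero_imp {A B : Type} [AddCommGroup A] [Module ℂ A]
    [AddCommGroup B] [Module ℂ B] [FiniteDimensional ℂ A] [FiniteDimensional ℂ B]
    (φ : A →ₗ[ℂ] B) (hz : ∀ z : B →ₗ[ℂ] A, LinearMap.trace ℂ B (φ ∘ₗ z) = 0) : φ = 0 := by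
  ext a
  rw [LinearMap.zero_apply, ← Module.forall_dual_apply_eq_zero_iff ℂ]
  intro gd
  have h1 := hz (dualTensorHom ℂ B A (gd ⊗ₜ a))
  have h2 : φ ∘ₗ dualTensorHom ℂ B A (gd ⊗ₜ a) = dualTensorHom ℂ B B (gd ⊗ₜ (φ a)) := by
    ext b; simp [dualTensorHom_apply]
  rw [h2, LinearMap.trace_eq_contract_apply, contractLeft_apply] at h1
  exact h1

section Main

variable {I Ω : Type} [Fintype I] [Fintype Ω] [DecidableEq I]
    (s t : Ω → I) (V V' W' : I → Type)
    [∀ j, AddCommGroup (V j)] [∀ j, Module ℂ (V j)]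
    [∀ j, AddCommGroup (V' j)] [∀ j, Module ℂ (V' j)]
    [∀ j, AddCommGroup (W' j)] [∀ j, Module ℂ (W' j)]
    (x : ∀ h : DblH Ω, V (dblSrc s t h) →ₗ[ℂ] V (dblTgt s t h))
    (x' : ∀ h : DblH Ω, V' (dblSrc s t h) →ₗ[ℂ] V' (dblTgt s t h))
    (f' : ∀ i, V' i →ₗ[ℂ] W' i)

/-- The summand of `ζ` attached to an arrow `h`. -/
noncomputable def zsummand (η : ∀ h : DblH Ω, V' (dblSrc s t h) →ₗ[ℂ] V (dblTgt s t h)) (i : I)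
    (h : DblH Ω) : V' i →ₗ[ℂ] V i :=
  if c : dblSrc s t h = i then
    dblEps (dblBar h) •
      lcast V' V c ((dblTgt_bar s t h).trans c)
        ((x (dblBar h)) ∘ₗ (cmap V (dblSrc_bar s t h).symm (η h)) +
         (η (dblBar h)) ∘ₗ (cmap V' (dblSrc_bar s t h).symm (x' h)))
  else 0

theorem zsummand_add (η₁ η₂ : ∀ h : DblH Ω, V' (dblSrc s t h) →ₗ[ℂ] V (dblTgt s t h))
    (i : I) (h : DblH Ω) :
    zsummand s t V V' x x' (η₁ + η₂) i h
      = zsummand s t V V' x x' η₁ i h + zsummand s t V V' x x' η₂ i h := by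
  unfold zsummand
  split
  · have e1 : (η₁ + η₂) h = η₁ h + η₂ h := rfl
    have e2 : (η₁ + η₂) (dblBar h) = η₁ (dblBar h) + η₂ (dblBar h) := rfl
    rw [e1, e2, cmap_add, comp_add, add_comp, add_add_add_comm, lcast_add, smul_add]
  · simp

theorem zsummand_smul (c : ℂ) (η : ∀ h : DblH Ω, V' (dblSrc s t h) →ₗ[ℂ] V (dblTgt s t h))
    (i : I) (h : DblH Ω) :
    zsummand s t V V' x x' (c • η) i h = c • zsummand s t V V' x x' η i h := by
  unfold zsummand
  split
  · have e1 : (c • η) h = c • η h := rfl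
    have e2 : (c • η) (dblBar h) = c • η (dblBar h) := rfl
    rw [e1, e2, cmap_smul, comp_smul, smul_comp, ← smul_add, lcast_smul, smul_comm]
  · simp

theorem zsummand_zero_of (η : ∀ h : DblH Ω, V' (dblSrc s t h) →ₗ[ℂ] V (dblTgt s t h))
    (i : I) (h : DblH Ω) (h1 : η h = 0) (h2 : η (dblBar h) = 0) :
    zsummand s t V V' x x' η i h = 0 := by
  unfold zsummand
  split
  · rw [h1, h2, cmap_zero, comp_zero, zero_comp, add_zero, lcast_zero, smul_zero]
  · rfl

/-- The map `ζ` as a bare function. -/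
noncomputable def zexpr (τ : ∀ i, W' i →ₗ[ℂ] V i)
    (η : ∀ h : DblH Ω, V' (dblSrc s t h) →ₗ[ℂ] V (dblTgt s t h)) :
    ∀ i, V' i →ₗ[ℂ] V i :=
  fun i => (τ i) ∘ₗ (f' i) + ∑ h : DblH Ω, zsummand s t V V' x x' η i h

/-- The map `ζ` as a linear map. -/
noncomputable def zmap : ((∀ i, W' i →ₗ[ℂ] V i) ×
      (∀ h : DblH Ω, V' (dblSrc s t h) →ₗ[ℂ] V (dblTgt s t h)))
    →ₗ[ℂ] (∀ i, V' i →ₗ[ℂ] V i) where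
  toFun p := zexpr s t V V' W' x x' f' p.1 p.2
  map_add' p q := by
    funext i
    show zexpr s t V V' W' x x' f' (p.1 + q.1) (p.2 + q.2) i = _
    simp only [zexpr, zsummand_add, Pi.add_apply, add_comp, Finset.sum_add_distrib]
    abel
  map_smul' c p := by
    funext i
    show zexpr s t V V' W' x x' f' (c • p.1) (c • p.2) i = _
    simp only [zexpr, zsummand_smul, Pi.smul_apply, smul_comp, RingHom.id_apply,
      ← Finset.smul_sum, smul_add]

/-- The trace pairing, as a linear map into the dual. -/
noncomputable def tracePairing (A B : I → Type)
    [∀ j, AddCommGroup (A j)] [∀ j, Module ℂ (A j)]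
    [∀ j, AddCommGroup (B j)] [∀ j, Module ℂ (B j)] :
    (∀ i, A i →ₗ[ℂ] B i) →ₗ[ℂ] Module.Dual ℂ (∀ i, B i →ₗ[ℂ] A i) where
  toFun φ :=
    { toFun := fun z => ∑ i, LinearMap.trace ℂ (B i) ((φ i) ∘ₗ (z i))
      map_add' := fun z w => by
        simp only [Pi.add_apply, comp_add, map_add, Finset.sum_add_distrib]
      map_smul' := fun c z => by
        simp only [Pi.smul_apply, comp_smul, map_smul, RingHom.id_apply, Finset.smul_sum] }
  map_add' φ ψ := by
    refine LinearMap.ext fun z => ?_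
    simp only [Pi.add_apply, add_comp, map_add, LinearMap.coe_mk, AddHom.coe_mk,
      LinearMap.add_apply, Finset.sum_add_distrib]
  map_smul' c φ := by
    refine LinearMap.ext fun z => ?_
    simp only [Pi.smul_apply, smul_comp, map_smul, RingHom.id_apply, LinearMap.coe_mk,
      AddHom.coe_mk, LinearMap.smul_apply, Finset.smul_sum]

theorem tracePairing_surjective (A B : I → Type)
    [∀ j, AddCommGroup (A j)] [∀ j, Module ℂ (A j)]
    [∀ j, AddCommGroup (B j)] [∀ j, Module ℂ (B j)]
    [∀ j, FiniteDimensional ℂ (A j)] [∀ j, FiniteDimensional ℂ (B j)] :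
    Function.Surjective (tracePairing A B) := by
  have hinj : Function.Injective (tracePairing A B) := by
    rw [injective_iff_map_eq_zero]
    intro φ hφ
    funext i
    show φ i = 0
    apply trace_comp_eq_zero_imp
    intro z
    have h1 : ∑ j, LinearMap.trace ℂ (B j)
        ((φ j) ∘ₗ ((Pi.single i z : ∀ j, B j →ₗ[ℂ] A j) j)) = 0 := by
      have := LinearMap.ext_iff.mp hφ (Pi.single i z : ∀ j, B j →ₗ[ℂ] A j)
      simpa [tracePairing] using this
    rw [Finset.sum_eq_single_of_mem i (Finset.mem_univ i)] at h1
    · rw [Pi.single_eq_same] at h1; exact h1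
    · intro j _ hj
      rw [Pi.single_eq_of_ne hj, comp_zero, map_zero]
  have hdim : Module.finrank ℂ (∀ i, A i →ₗ[ℂ] B i)
      = Module.finrank ℂ (Module.Dual ℂ (∀ i, B i →ₗ[ℂ] A i)) := by
    rw [Subspace.dual_finrank_eq, Module.finrank_pi_fintype, Module.finrank_pi_fintype]
    exact Finset.sum_congr rfl fun i _ => by
      rw [Module.finrank_linearMap, Module.finrank_linearMap, mul_comm]
  exact (LinearMap.injective_iff_surjective_of_finrank_eq_finrank hdim).mp hinj

end Main
/-- if `(x′, f′)` is stable, the linear map `ζ` with components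
`ζᵢ(τ,η) = τᵢ ∘ f′ᵢ + Σ_{h : s(h)=i} ε(h̄)·(x_{h̄} ∘ η_h + η_{h̄} ∘ x′_h)` is
surjective onto `⊕ᵢ Hom(V′ᵢ, Vᵢ)`. -/
theorem zeta_surjective
    (I Ω : Type) [Fintype I] [Fintype Ω] [DecidableEq I]
    (s t : Ω → I)
    (V V' W' : I → Type)
    [∀ j, AddCommGroup (V j)] [∀ j, Module ℂ (V j)] [∀ j, FiniteDimensional ℂ (V j)]
    [∀ j, AddCommGroup (V' j)] [∀ j, Module ℂ (V' j)] [∀ j, FiniteDimensional ℂ (V' j)]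
    [∀ j, AddCommGroup (W' j)] [∀ j, Module ℂ (W' j)] [∀ j, FiniteDimensional ℂ (W' j)]
    (x : ∀ h : DblH Ω, V (dblSrc s t h) →ₗ[ℂ] V (dblTgt s t h))
    (x' : ∀ h : DblH Ω, V' (dblSrc s t h) →ₗ[ℂ] V' (dblTgt s t h))
    (f' : ∀ i, V' i →ₗ[ℂ] W' i)
    (hstable : ∀ S : ∀ i, Submodule ℂ (V' i),
      (∀ i, S i ≤ LinearMap.ker (f' i)) →
      (∀ h : DblH Ω, ∀ v ∈ S (dblSrc s t h), x' h v ∈ S (dblTgt s t h)) →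
      ∀ i, S i = ⊥) :
    ∀ w : ∀ i, V' i →ₗ[ℂ] V i,
      ∃ (τ : ∀ i, W' i →ₗ[ℂ] V i)
        (η : ∀ h : DblH Ω, V' (dblSrc s t h) →ₗ[ℂ] V (dblTgt s t h)),
        ∀ i : I,
          (τ i) ∘ₗ (f' i) +
          (∑ h : DblH Ω,
            if c : dblSrc s t h = i then
              dblEps (dblBar h) •
                lcast V' V c ((dblTgt_bar s t h).trans c)
                  ((x (dblBar h)) ∘ₗ (cmap V (dblSrc_bar s t h).symm (η h)) +
                   (η (dblBar h)) ∘ₗ (cmap V' (dblSrc_bar s t h).symm (x' h)))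
            else 0) = w i := by

  classical
  intro w
  by_cases hR : LinearMap.range (zmap s t V V' W' x x' f') = ⊤
  · have hw : w ∈ LinearMap.range (zmap s t V V' W' x x' f') := hR ▸ Submodule.mem_top
    obtain ⟨⟨τ, η⟩, hτη⟩ := hw
    exact ⟨τ, η, fun i => congrFun hτη i⟩
  · exfalso
    obtain ⟨v, hv⟩ : ∃ v, v ∉ LinearMap.range (zmap s t V V' W' x x' f') := by
      by_contra hcon
      push_neg at hcon
      exact hR (Submodule.eq_top_iff'.mpr hcon)
    set R : Submodule ℂ (∀ i, V' i →ₗ[ℂ] V i) := LinearMap.range (zmap s t V V' W' x x' f')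
      with hRdef
    have hqv : R.mkQ v ≠ 0 := by
      rw [Submodule.mkQ_apply, Ne, Submodule.Quotient.mk_eq_zero]
      exact hv
    obtain ⟨ψ, hψ⟩ : ∃ ψ : Module.Dual ℂ ((∀ i, V' i →ₗ[ℂ] V i) ⧸ R), ψ (R.mkQ v) ≠ 0 := by
      by_contra hcon
      push_neg at hcon
      exact hqv ((Module.forall_dual_apply_eq_zero_iff ℂ _).mp hcon)
    set g : Module.Dual ℂ (∀ i, V' i →ₗ[ℂ] V i) := ψ ∘ₗ R.mkQ with hgdef
    have hg0 : g ≠ 0 := by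
      intro hc
      apply hψ
      have := LinearMap.ext_iff.mp hc v
      simpa [hgdef] using this
    have hgR : ∀ τ η, g (zexpr s t V V' W' x x' f' τ η) = 0 := by
      intro τ η
      have hmem : zexpr s t V V' W' x x' f' τ η ∈ R := ⟨(τ, η), rfl⟩
      show ψ (R.mkQ _) = 0
      rw [Submodule.mkQ_apply, (Submodule.Quotient.mk_eq_zero R).mpr hmem, map_zero]
    obtain ⟨φ, hφ⟩ := tracePairing_surjective V V' g
    have hφ' : ∀ z, g z = ∑ j, LinearMap.trace ℂ (V' j) ((φ j) ∘ₗ (z j)) := by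
      intro z
      rw [← hφ]
      rfl
    -- Condition 1 : `f' i ∘ φ i = 0`
    have hC1 : ∀ i, (f' i) ∘ₗ (φ i) = 0 := by
      intro i
      apply trace_comp_eq_zero_imp
      intro τ₀
      have h1 := hgR (Pi.single i τ₀ : ∀ j, W' j →ₗ[ℂ] V j) 0
      rw [hφ'] at h1
      have h2 : ∀ j, zexpr s t V V' W' x x' f' (Pi.single i τ₀ : ∀ j, W' j →ₗ[ℂ] V j) 0 j
          = ((Pi.single i τ₀ : ∀ j, W' j →ₗ[ℂ] V j) j) ∘ₗ f' j := by
        intro j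
        show _ + _ = _
        rw [Finset.sum_eq_zero, add_zero]
        intro h _
        exact zsummand_zero_of s t V V' x x' 0 j h rfl rfl
      have hcol : ∑ j, LinearMap.trace ℂ (V' j)
            ((φ j) ∘ₗ (zexpr s t V V' W' x x' f' (Pi.single i τ₀ : ∀ j, W' j →ₗ[ℂ] V j) 0 j))
          = LinearMap.trace ℂ (V' i) ((φ i) ∘ₗ (τ₀ ∘ₗ f' i)) := by
        rw [Finset.sum_eq_single_of_mem i (Finset.mem_univ i)]
        · rw [h2 i, Pi.single_eq_same]
        · intro j _ hj
          rw [h2 j, Pi.single_eq_of_ne hj, zero_comp, comp_zero, map_zero]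
      rw [hcol] at h1
      have h3 := LinearMap.trace_comp_comm' (R := ℂ) ((φ i) ∘ₗ τ₀) (f' i)
      rw [LinearMap.comp_assoc, h3]
      rwa [← LinearMap.comp_assoc] at h1
    -- Condition 2 : intertwining
    have hint : ∀ h₀ : DblH Ω,
        (φ (dblTgt s t h₀)) ∘ₗ (x h₀) = (x' h₀) ∘ₗ (φ (dblSrc s t h₀)) := by
      intro h₀
      cases h₀ with
      | inl a =>
        show (φ (t a)) ∘ₗ (x (Sum.inl a)) = (x' (Sum.inl a)) ∘ₗ (φ (s a))
        apply sub_eq_zero.mp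
        apply trace_comp_eq_zero_imp
        intro u
        set η : ∀ h : DblH Ω, V' (dblSrc s t h) →ₗ[ℂ] V (dblTgt s t h) :=
          Function.update (0 : ∀ h : DblH Ω, V' (dblSrc s t h) →ₗ[ℂ] V (dblTgt s t h))
            (Sum.inr a) u with hηdef
        have hη1 : η (Sum.inr a) = u := Function.update_self _ _ _
        have hη2 : ∀ b : Ω, η (Sum.inl b) = 0 := fun b =>
          Function.update_of_ne (by simp) _ _
        have hη3 : ∀ b : Ω, b ≠ a → η (Sum.inr b) = 0 := fun b hb =>
          Function.update_of_ne (by simp [hb]) _ _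
        have h1 := hgR 0 η
        rw [hφ'] at h1
        have hzj : ∀ j, zexpr s t V V' W' x x' f' 0 η j
            = zsummand s t V V' x x' η j (Sum.inl a)
              + zsummand s t V V' x x' η j (Sum.inr a) := by
          intro j
          show (0 : W' j →ₗ[ℂ] V j) ∘ₗ f' j
              + (∑ h : DblH Ω, zsummand s t V V' x x' η j h) = _
          rw [zero_comp, zero_add, Fintype.sum_sum_type]
          congr 1
          · exact Finset.sum_eq_single_of_mem a (Finset.mem_univ a)
              (fun b _ hb => zsummand_zero_of s t V V' x x' η j (Sum.inl b) (hη2 b)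
                (hη3 b hb))
          · exact Finset.sum_eq_single_of_mem a (Finset.mem_univ a)
              (fun b _ hb => zsummand_zero_of s t V V' x x' η j (Sum.inr b) (hη3 b hb)
                (hη2 b))
        simp only [hzj, comp_add, map_add, Finset.sum_add_distrib] at h1
        have hv1 : zsummand s t V V' x x' η (s a) (Sum.inl a)
            = (-1 : ℂ) • ((x (Sum.inr a)) ∘ₗ (η (Sum.inl a))
                + (η (Sum.inr a)) ∘ₗ (x' (Sum.inl a))) := by
          unfold zsummand
          rw [dif_pos (show dblSrc s t (Sum.inl a) = s a from rfl)]
          rfl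
        have hv2 : zsummand s t V V' x x' η (t a) (Sum.inr a)
            = (1 : ℂ) • ((x (Sum.inl a)) ∘ₗ (η (Sum.inr a))
                + (η (Sum.inl a)) ∘ₗ (x' (Sum.inr a))) := by
          unfold zsummand
          rw [dif_pos (show dblSrc s t (Sum.inr a) = t a from rfl)]
          rfl
        have hs1 : ∑ j, LinearMap.trace ℂ (V' j)
              ((φ j) ∘ₗ (zsummand s t V V' x x' η j (Sum.inl a)))
            = LinearMap.trace ℂ (V' (s a))
              ((φ (s a)) ∘ₗ zsummand s t V V' x x' η (s a) (Sum.inl a)) := by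
          rw [Finset.sum_eq_single_of_mem (s a) (Finset.mem_univ _)]
          intro j _ hj
          have h0 : zsummand s t V V' x x' η j (Sum.inl a) = 0 := by
            unfold zsummand
            exact dif_neg (fun c => hj c.symm)
          rw [h0, comp_zero, map_zero]
        have hs2 : ∑ j, LinearMap.trace ℂ (V' j)
              ((φ j) ∘ₗ (zsummand s t V V' x x' η j (Sum.inr a)))
            = LinearMap.trace ℂ (V' (t a))
              ((φ (t a)) ∘ₗ zsummand s t V V' x x' η (t a) (Sum.inr a)) := by
          rw [Finset.sum_eq_single_of_mem (t a) (Finset.mem_univ _)]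
          intro j _ hj
          have h0 : zsummand s t V V' x x' η j (Sum.inr a) = 0 := by
            unfold zsummand
            exact dif_neg (fun c => hj c.symm)
          rw [h0, comp_zero, map_zero]
        rw [hs1, hs2, hv1, hv2, hη1, hη2 a] at h1
        simp only [comp_zero, zero_comp, zero_add, add_zero, one_smul, neg_one_smul,
          comp_neg, map_neg] at h1
        erw [comp_zero, zero_comp, add_zero, zero_add, comp_neg, map_neg] at h1
        have e2 : LinearMap.trace ℂ (V' (s a)) ((φ (s a)) ∘ₗ (u ∘ₗ x' (Sum.inl a)))
            = LinearMap.trace ℂ (V' (t a)) (x' (Sum.inl a) ∘ₗ ((φ (s a)) ∘ₗ u)) := by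
          have e3 := LinearMap.trace_comp_comm' (R := ℂ) (x' (Sum.inl a)) ((φ (s a)) ∘ₗ u)
          exact e3
        erw [sub_comp, map_sub, LinearMap.comp_assoc, LinearMap.comp_assoc]
        linear_combination h1 + e2
      | inr a =>
        show (φ (s a)) ∘ₗ (x (Sum.inr a)) = (x' (Sum.inr a)) ∘ₗ (φ (t a))
        apply sub_eq_zero.mp
        apply trace_comp_eq_zero_imp
        intro u
        set η : ∀ h : DblH Ω, V' (dblSrc s t h) →ₗ[ℂ] V (dblTgt s t h) :=
          Function.update (0 : ∀ h : DblH Ω, V' (dblSrc s t h) →ₗ[ℂ] V (dblTgt s t h))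
            (Sum.inl a) u with hηdef
        have hη1 : η (Sum.inl a) = u := Function.update_self _ _ _
        have hη2 : ∀ b : Ω, η (Sum.inr b) = 0 := fun b =>
          Function.update_of_ne (by simp) _ _
        have hη3 : ∀ b : Ω, b ≠ a → η (Sum.inl b) = 0 := fun b hb =>
          Function.update_of_ne (by simp [hb]) _ _
        have h1 := hgR 0 η
        rw [hφ'] at h1
        have hzj : ∀ j, zexpr s t V V' W' x x' f' 0 η j
            = zsummand s t V V' x x' η j (Sum.inl a)
              + zsummand s t V V' x x' η j (Sum.inr a) := by
          intro j
          show (0 : W' j →ₗ[ℂ] V j) ∘ₗ f' j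
              + (∑ h : DblH Ω, zsummand s t V V' x x' η j h) = _
          rw [zero_comp, zero_add, Fintype.sum_sum_type]
          congr 1
          · exact Finset.sum_eq_single_of_mem a (Finset.mem_univ a)
              (fun b _ hb => zsummand_zero_of s t V V' x x' η j (Sum.inl b) (hη3 b hb)
                (hη2 b))
          · exact Finset.sum_eq_single_of_mem a (Finset.mem_univ a)
              (fun b _ hb => zsummand_zero_of s t V V' x x' η j (Sum.inr b) (hη2 b)
                (hη3 b hb))
        simp only [hzj, comp_add, map_add, Finset.sum_add_distrib] at h1
        have hv1 : zsummand s t V V' x x' η (s a) (Sum.inl a)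
            = (-1 : ℂ) • ((x (Sum.inr a)) ∘ₗ (η (Sum.inl a))
                + (η (Sum.inr a)) ∘ₗ (x' (Sum.inl a))) := by
          unfold zsummand
          rw [dif_pos (show dblSrc s t (Sum.inl a) = s a from rfl)]
          rfl
        have hv2 : zsummand s t V V' x x' η (t a) (Sum.inr a)
            = (1 : ℂ) • ((x (Sum.inl a)) ∘ₗ (η (Sum.inr a))
                + (η (Sum.inl a)) ∘ₗ (x' (Sum.inr a))) := by
          unfold zsummand
          rw [dif_pos (show dblSrc s t (Sum.inr a) = t a from rfl)]
          rfl
        have hs1 : ∑ j, LinearMap.trace ℂ (V' j)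
              ((φ j) ∘ₗ (zsummand s t V V' x x' η j (Sum.inl a)))
            = LinearMap.trace ℂ (V' (s a))
              ((φ (s a)) ∘ₗ zsummand s t V V' x x' η (s a) (Sum.inl a)) := by
          rw [Finset.sum_eq_single_of_mem (s a) (Finset.mem_univ _)]
          intro j _ hj
          have h0 : zsummand s t V V' x x' η j (Sum.inl a) = 0 := by
            unfold zsummand
            exact dif_neg (fun c => hj c.symm)
          rw [h0, comp_zero, map_zero]
        have hs2 : ∑ j, LinearMap.trace ℂ (V' j)
              ((φ j) ∘ₗ (zsummand s t V V' x x' η j (Sum.inr a)))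
            = LinearMap.trace ℂ (V' (t a))
              ((φ (t a)) ∘ₗ zsummand s t V V' x x' η (t a) (Sum.inr a)) := by
          rw [Finset.sum_eq_single_of_mem (t a) (Finset.mem_univ _)]
          intro j _ hj
          have h0 : zsummand s t V V' x x' η j (Sum.inr a) = 0 := by
            unfold zsummand
            exact dif_neg (fun c => hj c.symm)
          rw [h0, comp_zero, map_zero]
        rw [hs1, hs2, hv1, hv2, hη1, hη2 a] at h1
        simp only [comp_zero, zero_comp, zero_add, add_zero, one_smul, neg_one_smul,
          comp_neg, map_neg] at h1
        erw [comp_zero, zero_comp, add_zero, zero_add, comp_neg, map_neg] at h1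
        have e2 : LinearMap.trace ℂ (V' (t a)) ((φ (t a)) ∘ₗ (u ∘ₗ x' (Sum.inr a)))
            = LinearMap.trace ℂ (V' (s a)) (x' (Sum.inr a) ∘ₗ ((φ (t a)) ∘ₗ u)) := by
          have e3 := LinearMap.trace_comp_comm' (R := ℂ) (x' (Sum.inr a)) ((φ (t a)) ∘ₗ u)
          exact e3
        erw [sub_comp, map_sub, LinearMap.comp_assoc, LinearMap.comp_assoc]
        linear_combination e2 - h1
    -- stability
    have hker : ∀ i, LinearMap.range (φ i) ≤ LinearMap.ker (f' i) := by
      intro i v hv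
      obtain ⟨uu, rfl⟩ := hv
      rw [LinearMap.mem_ker, ← LinearMap.comp_apply, hC1 i, LinearMap.zero_apply]
    have hinv : ∀ h : DblH Ω, ∀ v ∈ LinearMap.range (φ (dblSrc s t h)),
        x' h v ∈ LinearMap.range (φ (dblTgt s t h)) := by
      intro h v hv
      obtain ⟨uu, rfl⟩ := hv
      rw [← LinearMap.comp_apply, ← hint h, LinearMap.comp_apply]
      exact LinearMap.mem_range_self _ _
    have hb := hstable (fun i => LinearMap.range (φ i)) hker hinv
    have hφ0 : ∀ i, φ i = 0 := fun i => LinearMap.range_eq_bot.mp (hb i)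
    apply hg0
    apply LinearMap.ext
    intro z
    rw [hφ' z]
    simp [hφ0]
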